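/- Let μ be a probability measure on ℝ^P supported in (0,∞)^P, and for t ∈ ℝ^P with all t_p ≤ 0 let M_μ(t) = ∫ e^(Σ_{p=1}^P t_p·β_p) dμ(β). Assume the x_{m,p} are integers with x_{m,p} ≥ 1 for all m, p, and assume Σ_{k ∈ ℕ^M} M_μ(−K_1(k), …, −K_P(k)) < ∞. Then ∫ [∏_{m=1}^M e^(−y_m·(X_m·β)) / (1 + e^(−(X_m·β)))] dμ(β) = Σ_{r ∈ ℕ^P} (K(x,r,+) − K(x,r,−)) · M_μ(−(Y_1 + r_1), …, −(Y_P + r_P)), with the series converging absolutely. -/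

import Mathlib

open MeasureTheory

/-- `K_p(k) = Σ_m (y_m + k_m)·x_{m,p}` (with integer-valued covariates `x`). -/
noncomputable def Kcoef {M P : ℕ} (x : Fin M → Fin P → ℕ) (y : Fin M → ℝ)
    (k : Fin M → ℕ) (p : Fin P) : ℝ :=
  ∑ m, (y m + k m) * x m p

/-- `K(x,r,+)`, the number of `k ∈ ℕ^M` with `Σ_m k_m·x_{m,p} = r_p` for all `p`
and `|k|` even. -/
noncomputable def Kplus {M P : ℕ} (x : Fin M → Fin P → ℕ) (r : Fin P → ℕ) : ℕ :=
  Nat.card {k : Fin M → ℕ // (∀ p, ∑ m, k m * x m p = r p) ∧ Even (∑ m, k m)}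

/-- `K(x,r,−)`, the number of `k ∈ ℕ^M` with `Σ_m k_m·x_{m,p} = r_p` for all `p`
and `|k|` odd. -/
noncomputable def Kminus {M P : ℕ} (x : Fin M → Fin P → ℕ) (r : Fin P → ℕ) : ℕ :=
  Nat.card {k : Fin M → ℕ // (∀ p, ∑ m, k m * x m p = r p) ∧ Odd (∑ m, k m)}


def piSuccEquiv (n : ℕ) : (Fin (n + 1) → ℕ) ≃ ℕ × (Fin n → ℕ) where
  toFun k := (k 0, fun i => k i.succ)
  invFun p := Fin.cons p.1 p.2
  left_inv k := Fin.cons_self_tail k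
  right_inv p := by simp

lemma summable_norm_pi_prod : ∀ {n : ℕ} (g : Fin n → ℕ → ℝ),
    (∀ i, Summable fun j => ‖g i j‖) →
    Summable (fun k : Fin n → ℕ => ‖∏ i, g i (k i)‖) := by
  intro n
  induction n with
  | zero =>
      intro g h
      haveI : Finite (Fin 0 → ℕ) := Finite.of_subsingleton
      exact Summable.of_finite
  | succ n ih =>
      intro g h
      have h2 := ih (fun i => g i.succ) (fun i => h i.succ)
      have hm := (h 0).mul_norm h2
      refine (Equiv.summable_iff (piSuccEquiv n).symm).mp (hm.congr fun p => ?_)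
      simp only [Function.comp_apply, piSuccEquiv, Equiv.coe_fn_symm_mk]
      congr 1
      rw [Fin.prod_univ_succ]
      rfl

lemma tsum_pi_prod : ∀ {n : ℕ} (g : Fin n → ℕ → ℝ),
    (∀ i, Summable fun j => ‖g i j‖) →
    ∑' k : Fin n → ℕ, ∏ i, g i (k i) = ∏ i, ∑' j, g i j := by
  intro n
  induction n with
  | zero =>
      intro g h
      haveI : Unique (Fin 0 → ℕ) :=
        ⟨⟨fun i => i.elim0⟩, fun k => funext fun i => i.elim0⟩
      rw [tsum_eq_single (default : Fin 0 → ℕ)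
        (fun b hb => absurd (Subsingleton.elim b default) hb)]
      simp
  | succ n ih =>
      intro g h
      have h2 : Summable (fun k : Fin n → ℕ => ‖∏ i, g i.succ (k i)‖) :=
        summable_norm_pi_prod _ (fun i => h i.succ)
      calc ∑' k : Fin (n+1) → ℕ, ∏ i, g i (k i)
          = ∑' z : ℕ × (Fin n → ℕ), g 0 z.1 * ∏ i, g i.succ (z.2 i) := by
            rw [← (piSuccEquiv n).tsum_eq
              (fun z : ℕ × (Fin n → ℕ) => g 0 z.1 * ∏ i, g i.succ (z.2 i))]
            refine tsum_congr fun k => ?_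
            simp only [piSuccEquiv, Equiv.coe_fn_mk]
            rw [Fin.prod_univ_succ]
            rfl
        _ = (∑' j, g 0 j) * ∑' k : Fin n → ℕ, ∏ i, g i.succ (k i) :=
            (tsum_mul_tsum_of_summable_norm (h 0) h2).symm
        _ = ∏ i, ∑' j, g i j := by
            rw [ih _ (fun i => h i.succ), Fin.prod_univ_succ]


/-- Theorem 5 of the paper: regrouped (Diophantine) series expansion of the marginalized
logit likelihood against any probability distribution `μ` supported in `(0,∞)^P`, in terms
of evaluations of the moment generating function `M_μ(t) = ∫ e^(Σ_p t_p β_p) dμ(β)` at the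
points `(−(Y_1+r_1), …, −(Y_P+r_P))`. -/
theorem integral_logit_eq_tsum_mgf_diophantine (M P : ℕ) (hM : 1 ≤ M) (hP : 1 ≤ P)
    (x : Fin M → Fin P → ℕ) (hx : ∀ m p, 1 ≤ x m p)
    (y : Fin M → ℝ) (hy : ∀ m, y m = 0 ∨ y m = 1)
    (μ : Measure (Fin P → ℝ)) [IsProbabilityMeasure μ]
    (hsupp : μ {β | ∀ p, 0 < β p}ᶜ = 0)
    (hsum : Summable fun k : Fin M → ℕ =>
      ∫ β, Real.exp (∑ p, -Kcoef x y k p * β p) ∂μ) :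
    Summable (fun r : Fin P → ℕ =>
      |((Kplus x r : ℝ) - (Kminus x r : ℝ)) *
        ∫ β, Real.exp (∑ p, -((∑ m, y m * x m p) + r p) * β p) ∂μ|) ∧
    ∫ β, ∏ m, Real.exp (-(y m * ∑ p, (x m p : ℝ) * β p)) /
        (1 + Real.exp (-(∑ p, (x m p : ℝ) * β p))) ∂μ
      = ∑' r : Fin P → ℕ,
          ((Kplus x r : ℝ) - (Kminus x r : ℝ)) *
            ∫ β, Real.exp (∑ p, -((∑ m, y m * x m p) + r p) * β p) ∂μ := by
  classical
  set J : (Fin P → ℕ) → ℝ :=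
    fun r => ∫ β, Real.exp (∑ p, -((∑ m, y m * x m p) + r p) * β p) ∂μ with hJdef
  set I : (Fin M → ℕ) → ℝ :=
    fun k => ∫ β, Real.exp (∑ p, -Kcoef x y k p * β p) ∂μ with hIdef
  have hsumI : Summable I := hsum
  set φ : (Fin M → ℕ) → (Fin P → ℕ) := fun k p => ∑ m, k m * x m p with hφdef
  set F : (Fin M → ℕ) → (Fin P → ℝ) → ℝ :=
    fun k β => (-1 : ℝ) ^ (∑ m, k m) * Real.exp (∑ p, -Kcoef x y k p * β p) with hFdef
  have hy0 : ∀ m, 0 ≤ y m := fun m => by rcases hy m with h | h <;> simp [h]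
  have hK0 : ∀ k p, 0 ≤ Kcoef x y k p := fun k p =>
    Finset.sum_nonneg fun m _ =>
      mul_nonneg (add_nonneg (hy0 m) (Nat.cast_nonneg _)) (Nat.cast_nonneg _)
  have hI0 : ∀ k, 0 ≤ I k := fun k => integral_nonneg fun β => (Real.exp_pos _).le
  have hJ0 : ∀ r, 0 ≤ J r := fun r => integral_nonneg fun β => (Real.exp_pos _).le
  -- I k = J (φ k)
  have hIJ : ∀ k, I k = J (φ k) := by
    intro k
    rw [hIdef, hJdef]
    dsimp only
    congr 1
    funext β
    congr 1
    refine Finset.sum_congr rfl fun p _ => ?_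
    congr 1
    rw [hφdef]
    simp only [Kcoef]
    push_cast
    rw [← Finset.sum_add_distrib]
    exact congrArg Neg.neg (Finset.sum_congr rfl fun m _ => by ring)
  -- a.e. positivity
  have hae : ∀ᵐ β ∂μ, ∀ p, 0 < β p := by
    rw [ae_iff]
    convert hsupp using 2
    rfl
  -- measurability and integrability of F k
  have hFc : ∀ k, Continuous (F k) := fun k =>
    continuous_const.mul (Real.continuous_exp.comp
      (continuous_finset_sum _ fun p _ => (continuous_const.mul (continuous_apply p))))
  have hFm : ∀ k, AEStronglyMeasurable (F k) μ := fun k => (hFc k).aestronglyMeasurable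
  have hFnorm : ∀ k β, ‖F k β‖ = Real.exp (∑ p, -Kcoef x y k p * β p) := by
    intro k β
    rw [hFdef]
    simp only [norm_mul, norm_pow, norm_neg, norm_one, one_pow, one_mul,
      Real.norm_eq_abs, abs_of_pos (Real.exp_pos _)]
  have hFbound : ∀ k, ∀ᵐ β ∂μ, ‖F k β‖ ≤ 1 := by
    intro k
    filter_upwards [hae] with β hβ
    rw [hFnorm]
    rw [← Real.exp_zero]
    apply Real.exp_le_exp.mpr
    apply Finset.sum_nonpos
    intro p _
    have := mul_nonneg (hK0 k p) (hβ p).le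
    linarith
  have hFi : ∀ k, Integrable (F k) μ :=
    fun k => Integrable.mono' (integrable_const 1) (hFm k) (hFbound k)
  have hInorm : ∀ k, ∫ β, ‖F k β‖ ∂μ = I k := by
    intro k
    rw [hIdef]
    exact integral_congr_ae (Filter.Eventually.of_forall fun β => hFnorm k β)
  have hlin : ∑' k, ∫⁻ β, ‖F k β‖₊ ∂μ ≠ ⊤ := by
    have heq : ∀ k : Fin M → ℕ, ∫⁻ β, ‖F k β‖₊ ∂μ = ENNReal.ofReal (I k) := by
      intro k
      simp only [← enorm_eq_nnnorm]
      rw [← ofReal_integral_norm_eq_lintegral_enorm (hFi k), hInorm k]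
    rw [tsum_congr heq, ← ENNReal.ofReal_tsum_of_nonneg hI0 hsumI]
    exact ENNReal.ofReal_ne_top
  -- pointwise expansion
  have hptw : ∀ᵐ β ∂μ, (∏ m, Real.exp (-(y m * ∑ p, (x m p : ℝ) * β p)) /
      (1 + Real.exp (-(∑ p, (x m p : ℝ) * β p)))) = ∑' k, F k β := by
    filter_upwards [hae] with β hβ
    set t : Fin M → ℝ := fun m => ∑ p, (x m p : ℝ) * β p with htdef
    have ht : ∀ m, 0 < t m := by
      intro m
      apply Finset.sum_pos
      · intro p _
        exact mul_pos (by exact_mod_cast Nat.lt_of_lt_of_le Nat.zero_lt_one (hx m p)) (hβ p)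
      · exact ⟨⟨0, hP⟩, Finset.mem_univ _⟩
    have hq : ∀ m, ‖-Real.exp (-t m)‖ < 1 := by
      intro m
      rw [norm_neg, Real.norm_eq_abs, abs_of_pos (Real.exp_pos _)]
      exact Real.exp_lt_one_iff.mpr (neg_neg_iff_pos.mpr (ht m))
    set g : Fin M → ℕ → ℝ :=
      fun m n => Real.exp (-(y m * t m)) * (-Real.exp (-t m)) ^ n with hgdef
    have hgs : ∀ m, Summable fun n => ‖g m n‖ := by
      intro m
      refine ((summable_geometric_of_lt_one (Real.exp_pos (-t m)).le
        (Real.exp_lt_one_iff.mpr (neg_neg_iff_pos.mpr (ht m)))).mul_left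
        (Real.exp (-(y m * t m)))).congr fun n => ?_
      rw [hgdef]
      simp [norm_mul, norm_pow, abs_of_pos (Real.exp_pos _), mul_comm]
    have hFg : ∀ k : Fin M → ℕ, F k β = ∏ m, g m (k m) := by
      intro k
      have hsum_eq : ∑ p, -Kcoef x y k p * β p = ∑ m, -((y m + (k m : ℝ)) * t m) := by
        calc ∑ p, -Kcoef x y k p * β p
            = ∑ p, ∑ m, -((y m + (k m : ℝ)) * ((x m p : ℝ) * β p)) := by
              refine Finset.sum_congr rfl fun p _ => ?_
              rw [show Kcoef x y k p = ∑ m, (y m + (k m : ℝ)) * (x m p : ℝ) from rfl,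
                neg_mul, Finset.sum_mul, ← Finset.sum_neg_distrib]
              exact Finset.sum_congr rfl fun m _ => by rw [mul_assoc]
          _ = ∑ m, ∑ p, -((y m + (k m : ℝ)) * ((x m p : ℝ) * β p)) := Finset.sum_comm
          _ = ∑ m, -((y m + (k m : ℝ)) * t m) := by
              refine Finset.sum_congr rfl fun m _ => ?_
              rw [Finset.sum_neg_distrib, ← Finset.mul_sum]
      rw [hFdef]
      dsimp only
      rw [hsum_eq, Real.exp_sum, ← Finset.prod_pow_eq_pow_sum, ← Finset.prod_mul_distrib]
      refine Finset.prod_congr rfl fun m _ => ?_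
      rw [hgdef]
      dsimp only
      conv_rhs => rw [neg_pow, ← Real.exp_nat_mul]
      have hexp : Real.exp (-((y m + (k m : ℝ)) * t m))
          = Real.exp (-(y m * t m)) * Real.exp ((k m : ℝ) * -t m) := by
        rw [← Real.exp_add]; congr 1; ring
      rw [hexp]; ring
    rw [tsum_congr hFg, tsum_pi_prod g hgs]
    refine Finset.prod_congr rfl fun m _ => ?_
    rw [hgdef]
    dsimp only
    rw [tsum_mul_left, tsum_geometric_of_norm_lt_one (hq m), sub_neg_eq_add, div_eq_mul_inv]
  -- exchange integral and sum
  set a : (Fin M → ℕ) → ℝ := fun k => (-1 : ℝ) ^ (∑ m, k m) * I k with hadef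
  have hswap : (∫ β, ∏ m, Real.exp (-(y m * ∑ p, (x m p : ℝ) * β p)) /
      (1 + Real.exp (-(∑ p, (x m p : ℝ) * β p))) ∂μ) = ∑' k, a k := by
    rw [integral_congr_ae hptw, integral_tsum hFm hlin]
    refine tsum_congr fun k => ?_
    rw [hadef, hFdef, hIdef]
    dsimp only
    rw [integral_const_mul]
  have hA : Summable a :=
    Summable.of_norm (hsumI.congr fun k => by
      rw [hadef]
      dsimp only
      rw [norm_mul, norm_pow, norm_neg, norm_one, one_pow, one_mul,
        Real.norm_eq_abs, abs_of_nonneg (hI0 k)])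
  -- finiteness of fibers
  have hfin : ∀ r : Fin P → ℕ, ({k : Fin M → ℕ | φ k = r}).Finite := by
    intro r
    set p0 : Fin P := ⟨0, hP⟩
    apply Set.Finite.subset (Set.Finite.pi (fun m : Fin M => Set.finite_Iic (r p0)))
    intro k hk
    simp only [Set.mem_pi, Set.mem_univ, Set.mem_Iic, forall_true_left]
    intro m
    have h1 : k m * x m p0 ≤ r p0 := by
      have := congrFun (Set.mem_setOf_eq ▸ hk) p0
      rw [hφdef] at this
      exact this ▸ Finset.single_le_sum (f := fun m => k m * x m p0)
        (fun i _ => Nat.zero_le _) (Finset.mem_univ m)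
    calc k m ≤ k m * x m p0 := Nat.le_mul_of_pos_right _ (hx m p0)
      _ ≤ r p0 := h1
  haveI inst : ∀ r : Fin P → ℕ, Fintype {k : Fin M → ℕ // φ k = r} :=
    fun r => (hfin r).fintype
  -- counting: signed count of the fiber
  have hcount : ∀ r : Fin P → ℕ,
      ∑ σ : {k : Fin M → ℕ // φ k = r}, ((-1 : ℝ)) ^ (∑ m, σ.1 m)
        = (Kplus x r : ℝ) - (Kminus x r : ℝ) := by
    intro r
    have step : ∀ σ : {k : Fin M → ℕ // φ k = r},
        ((-1 : ℝ)) ^ (∑ m, σ.1 m) = if Even (∑ m, σ.1 m) then (1 : ℝ) else -1 := by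
      intro σ
      split_ifs with h
      · exact Even.neg_one_pow h
      · exact Odd.neg_one_pow (Nat.not_even_iff_odd.mp h)
    rw [Finset.sum_congr rfl (fun σ _ => step σ), Finset.sum_ite,
      Finset.sum_const, Finset.sum_const]
    have hplus : Kplus x r
        = (Finset.univ.filter (fun σ : {k : Fin M → ℕ // φ k = r} =>
            Even (∑ m, σ.1 m))).card := by
      rw [Kplus, ← Fintype.card_subtype, ← Nat.card_eq_fintype_card]
      refine Nat.card_congr ?_
      exact { toFun := fun a => ⟨⟨a.1, funext fun p => (hφdef ▸ a.2.1 p : _)⟩, a.2.2⟩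
              invFun := fun b => ⟨b.1.1, ⟨fun p => congrFun b.1.2 p, b.2⟩⟩
              left_inv := fun a => rfl
              right_inv := fun b => rfl }
    have hminus : Kminus x r
        = (Finset.univ.filter (fun σ : {k : Fin M → ℕ // φ k = r} =>
            ¬ Even (∑ m, σ.1 m))).card := by
      rw [Kminus, ← Fintype.card_subtype, ← Nat.card_eq_fintype_card]
      refine Nat.card_congr ?_
      exact { toFun := fun a => ⟨⟨a.1, funext fun p => (hφdef ▸ a.2.1 p : _)⟩,
                Nat.not_even_iff_odd.mpr a.2.2⟩
              invFun := fun b => ⟨b.1.1, ⟨fun p => congrFun b.1.2 p,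
                Nat.not_even_iff_odd.mp b.2⟩⟩
              left_inv := fun a => rfl
              right_inv := fun b => rfl }
    rw [hplus, hminus]
    simp [nsmul_eq_mul]
    ring
  -- fiberwise sums
  have hfibJ : ∀ r : Fin P → ℕ,
      HasSum (fun σ : {k : Fin M → ℕ // φ k = r} => a σ.1)
        (((Kplus x r : ℝ) - (Kminus x r : ℝ)) * J r) := by
    intro r
    have hval : ∑ σ : {k : Fin M → ℕ // φ k = r}, a σ.1
        = ((Kplus x r : ℝ) - (Kminus x r : ℝ)) * J r := by
      rw [← hcount r, Finset.sum_mul]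
      refine Finset.sum_congr rfl fun σ _ => ?_
      rw [hadef]
      dsimp only
      rw [hIJ σ.1, σ.2]
    exact hval ▸ hasSum_fintype _
  have hsig : HasSum (fun σ : Σ r : Fin P → ℕ, {k : Fin M → ℕ // φ k = r} => a σ.2)
      (∑' k, a k) := ((Equiv.sigmaFiberEquiv φ).hasSum_iff).mpr hA.hasSum
  have hreg : HasSum (fun r : Fin P → ℕ => ((Kplus x r : ℝ) - (Kminus x r : ℝ)) * J r)
      (∑' k, a k) := hsig.sigma hfibJ
  have hsigI : HasSum (fun σ : Σ r : Fin P → ℕ, {k : Fin M → ℕ // φ k = r} => I σ.2)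
      (∑' k, I k) := ((Equiv.sigmaFiberEquiv φ).hasSum_iff).mpr hsumI.hasSum
  have hregI : HasSum (fun r : Fin P → ℕ => ∑ σ : {k : Fin M → ℕ // φ k = r}, I σ.1)
      (∑' k, I k) := hsigI.sigma fun r => hasSum_fintype _
  have hbound : ∀ r : Fin P → ℕ, |((Kplus x r : ℝ) - (Kminus x r : ℝ)) * J r|
      ≤ ∑ σ : {k : Fin M → ℕ // φ k = r}, I σ.1 := by
    intro r
    have h1 : ∑ σ : {k : Fin M → ℕ // φ k = r}, I σ.1
        = (Fintype.card {k : Fin M → ℕ // φ k = r} : ℝ) * J r := by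
      rw [Finset.sum_congr rfl (fun σ _ => by rw [hIJ σ.1, σ.2]), Finset.sum_const,
        nsmul_eq_mul, Finset.card_univ]
    rw [h1, abs_mul, abs_of_nonneg (hJ0 r)]
    refine mul_le_mul_of_nonneg_right ?_ (hJ0 r)
    rw [← hcount r]
    refine (Finset.abs_sum_le_sum_abs _ _).trans (le_of_eq ?_)
    calc ∑ σ : {k : Fin M → ℕ // φ k = r}, |(-1 : ℝ) ^ (∑ m, σ.1 m)|
        = ∑ _σ : {k : Fin M → ℕ // φ k = r}, (1 : ℝ) :=
          Finset.sum_congr rfl fun σ _ => by simp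
      _ = (Fintype.card {k : Fin M → ℕ // φ k = r} : ℝ) := by simp
  have hsummable : Summable (fun r : Fin P → ℕ =>
      |((Kplus x r : ℝ) - (Kminus x r : ℝ)) * J r|) :=
    Summable.of_nonneg_of_le (fun r => abs_nonneg _) hbound hregI.summable
  exact ⟨hsummable, hswap.trans hreg.tsum_eq.symm⟩
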